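/- The decomposition map DCP is a bijection from {(π,k) : π ∈ P_{1,2}(n), {k} ∈ s(π)} onto dcp(n) := {(π^m, k, σ^l, σ^r) : π^m ∈ P_{1,2}(n), k ∈ ∩p(π^m), σ^l ∈ P_{1,2}(|s^k_l(π^m)|), σ^r ∈ P_{1,2}(|s^k_r(π^m)|)}, where DCP(π,k) = (π^m, k, σ^l, σ^r): π^m is the incomplete matching whose pairs are exactly the pairs {i,j} of π with i<k<j (all other points singletons), s^k_l(π^m) (resp. s^k_r(π^m)) are the singletons of π^m strictly left (resp. right) of k, and σ^l, σ^r are the matchings induced on these sets by the remaining pairs of π, relabeled order-preservingly. -/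

import Mathlib

open scoped Classical

noncomputable def lo (V : Finset ℕ) : ℕ := WithTop.untopD 0 V.min
noncomputable def hi (V : Finset ℕ) : ℕ := WithBot.unbotD 0 V.max

/-- `π` is an incomplete matching of `[n] = {1,…,n}`. -/
def IsIM (n : ℕ) (π : Finset (Finset ℕ)) : Prop :=
  (∀ B ∈ π, B.card = 1 ∨ B.card = 2) ∧
  (∀ B ∈ π, ∀ C ∈ π, B ≠ C → Disjoint B C) ∧
  π.biUnion id = Finset.Icc 1 n

/-- The singletons of `ρ` strictly to the left of `k`. -/
noncomputable def singLeft (ρ : Finset (Finset ℕ)) (k : ℕ) : Finset ℕ :=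
  ((ρ.filter (fun B => B.card = 1)).biUnion id).filter (· < k)

/-- The singletons of `ρ` strictly to the right of `k`. -/
noncomputable def singRight (ρ : Finset (Finset ℕ)) (k : ℕ) : Finset ℕ :=
  ((ρ.filter (fun B => B.card = 1)).biUnion id).filter (k < ·)

/-- The decomposition `DCP(π,k) = (π^m, k, σ^l, σ^r)`: `π^m` keeps exactly the pairs of
`π` straddling `k` (all other points become singletons); `σ^l` (resp. `σ^r`) is the
matching induced by the remaining pairs of `π` on the singletons of `π^m` to the left
(resp. right) of `k`, relabeled order-preservingly. -/
noncomputable def DCPfun (n : ℕ) (p : Finset (Finset ℕ) × ℕ) :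
    Finset (Finset ℕ) × ℕ × Finset (Finset ℕ) × Finset (Finset ℕ) :=
  let π := p.1
  let k := p.2
  let strad := π.filter (fun B => B.card = 2 ∧ lo B < k ∧ k < hi B)
  let covered := strad.biUnion id
  let πm := strad ∪ ((Finset.Icc 1 n \ covered).image (fun m => ({m} : Finset ℕ)))
  let Sl := (Finset.Icc 1 n \ covered).filter (· < k)
  let Sr := (Finset.Icc 1 n \ covered).filter (k < ·)
  (πm, k,
    (π.filter (fun B => B ⊆ Sl)).image
      (fun B => B.image (fun m => (Sl.filter (· ≤ m)).card)),
    (π.filter (fun B => B ⊆ Sr)).image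
      (fun B => B.image (fun m => (Sr.filter (· ≤ m)).card)))

section DCPhelpers

lemma lo_eq {B : Finset ℕ} (h : B.Nonempty) : lo B = B.min' h := by
  rw [lo, ← Finset.coe_min' h]; rfl

lemma hi_eq {B : Finset ℕ} (h : B.Nonempty) : hi B = B.max' h := by
  rw [hi, ← Finset.coe_max' h]; rfl

lemma lo_mem {B : Finset ℕ} (h : B.Nonempty) : lo B ∈ B := by
  rw [lo_eq h]; exact B.min'_mem h

lemma hi_mem {B : Finset ℕ} (h : B.Nonempty) : hi B ∈ B := by
  rw [hi_eq h]; exact B.max'_mem h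

lemma lo_le {B : Finset ℕ} {m : ℕ} (h : m ∈ B) : lo B ≤ m := by
  rw [lo_eq ⟨m, h⟩]; exact Finset.min'_le _ _ h

lemma le_hi {B : Finset ℕ} {m : ℕ} (h : m ∈ B) : m ≤ hi B := by
  rw [hi_eq ⟨m, h⟩]; exact Finset.le_max' _ _ h

lemma lo_pair (a b : ℕ) : lo {a, b} = min a b := by
  simp only [lo, Finset.min_insert, Finset.min_singleton]
  rw [← WithTop.coe_inf, WithTop.untopD_coe]

lemma hi_pair (a b : ℕ) : hi {a, b} = max a b := by
  simp only [hi, Finset.max_insert, Finset.max_singleton]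
  rw [← WithBot.coe_sup, WithBot.unbotD_coe]

lemma mem_pair_cases {B : Finset ℕ} (h : B.card = 2) {m : ℕ} (hm : m ∈ B) :
    m = lo B ∨ m = hi B := by
  obtain ⟨a, b, hab, rfl⟩ := Finset.card_eq_two.mp h
  rw [lo_pair, hi_pair]
  rcases Finset.mem_insert.mp hm with rfl | hm
  · rcases le_total m b with h' | h' <;> simp [min_eq_left, max_eq_left, h'] <;> omega
  · rw [Finset.mem_singleton] at hm; subst hm
    rcases le_total a m with h' | h' <;> omega

/-- rank map -/
noncomputable def rk (S : Finset ℕ) (m : ℕ) : ℕ := (S.filter (· ≤ m)).card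

lemma rk_lt_rk {S : Finset ℕ} {a b : ℕ} (hb : b ∈ S) (hab : a < b) :
    rk S a < rk S b := by
  apply Finset.card_lt_card
  constructor
  · intro x hx
    simp only [Finset.mem_filter] at hx ⊢
    exact ⟨hx.1, hx.2.trans hab.le⟩
  · intro hsub
    have : b ∈ S.filter (· ≤ a) := hsub (by simp [hb])
    simp at this; omega

lemma rk_injOn (S : Finset ℕ) : Set.InjOn (rk S) ↑S := by
  intro a ha b hb hab
  by_contra hne
  rcases Nat.lt_or_ge a b with h | h
  · exact absurd hab (rk_lt_rk hb h).ne
  · have : b < a := by omega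
    exact absurd hab.symm (rk_lt_rk ha this).ne

lemma rk_mem {S : Finset ℕ} {m : ℕ} (hm : m ∈ S) : rk S m ∈ Finset.Icc 1 S.card := by
  simp only [Finset.mem_Icc]
  constructor
  · have : m ∈ S.filter (· ≤ m) := by simp [hm]
    exact Finset.card_pos.mpr ⟨m, this⟩
  · exact Finset.card_le_card (Finset.filter_subset _ _)

lemma rk_image (S : Finset ℕ) : S.image (rk S) = Finset.Icc 1 S.card := by
  apply Finset.eq_of_subset_of_card_le
  · intro x hx
    obtain ⟨m, hm, rfl⟩ := Finset.mem_image.mp hx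
    exact rk_mem hm
  · rw [Nat.card_Icc, Finset.card_image_of_injOn (rk_injOn S)]
    omega

lemma rk_image_inj {S B C : Finset ℕ} (hB : B ⊆ S) (hC : C ⊆ S)
    (h : B.image (rk S) = C.image (rk S)) : B = C := by
  ext x
  constructor <;> intro hx
  · have : rk S x ∈ C.image (rk S) := h ▸ Finset.mem_image_of_mem _ hx
    obtain ⟨y, hy, hyx⟩ := Finset.mem_image.mp this
    rwa [← rk_injOn S (hC hy) (hB hx) hyx]
  · have : rk S x ∈ B.image (rk S) := h.symm ▸ Finset.mem_image_of_mem _ hx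
    obtain ⟨y, hy, hyx⟩ := Finset.mem_image.mp this
    rwa [← rk_injOn S (hB hy) (hC hx) hyx]

lemma sets_image_inj {S : Finset ℕ} {T T' : Finset (Finset ℕ)}
    (hT : ∀ B ∈ T, B ⊆ S) (hT' : ∀ B ∈ T', B ⊆ S)
    (h : T.image (fun B => B.image (rk S)) = T'.image (fun B => B.image (rk S))) :
    T = T' := by
  ext B
  constructor <;> intro hB
  · have : B.image (rk S) ∈ T'.image (fun B => B.image (rk S)) :=
      h ▸ Finset.mem_image_of_mem _ hB
    obtain ⟨C, hC, hCB⟩ := Finset.mem_image.mp this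
    rwa [← rk_image_inj (hT' C hC) (hT _ hB) hCB]
  · have : B.image (rk S) ∈ T.image (fun B => B.image (rk S)) :=
      h.symm ▸ Finset.mem_image_of_mem _ hB
    obtain ⟨C, hC, hCB⟩ := Finset.mem_image.mp this
    rwa [← rk_image_inj (hT C hC) (hT' _ hB) hCB]

variable {n k : ℕ} {π : Finset (Finset ℕ)}

lemma IM_nonempty (h : IsIM n π) {B : Finset ℕ} (hB : B ∈ π) : B.Nonempty := by
  rcases h.1 B hB with h1 | h1 <;> (rw [← Finset.card_pos]; omega)

lemma IM_block_subset (h : IsIM n π) {B : Finset ℕ} (hB : B ∈ π) : B ⊆ Finset.Icc 1 n := by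
  intro x hx
  rw [← h.2.2]
  exact Finset.mem_biUnion.mpr ⟨B, hB, hx⟩

lemma IM_exists_block (h : IsIM n π) {m : ℕ} (hm : m ∈ Finset.Icc 1 n) :
    ∃ B ∈ π, m ∈ B := by
  rw [← h.2.2] at hm
  exact Finset.mem_biUnion.mp hm

lemma IM_unique_block (h : IsIM n π) {B C : Finset ℕ} {m : ℕ} (hB : B ∈ π) (hC : C ∈ π)
    (hmB : m ∈ B) (hmC : m ∈ C) : B = C := by
  by_contra hne
  exact Finset.disjoint_left.mp (h.2.1 B hB C hC hne) hmB hmC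

/-- restriction of an IM to a "closed" subset, relabeled by rank -/
lemma IM_restrict (h : IsIM n π) {S : Finset ℕ} (hS : S ⊆ Finset.Icc 1 n)
    (hblk : ∀ B ∈ π, ∀ m ∈ B, m ∈ S → B ⊆ S) :
    IsIM S.card ((π.filter (fun B => B ⊆ S)).image (fun B => B.image (rk S))) := by
  have hinj : ∀ B : Finset ℕ, B ⊆ S → Set.InjOn (rk S) ↑B := fun B hBS =>
    (rk_injOn S).mono (by exact_mod_cast hBS)
  refine ⟨?_, ?_, ?_⟩
  · intro B hB
    obtain ⟨B₀, hB₀, rfl⟩ := Finset.mem_image.mp hB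
    rw [Finset.mem_filter] at hB₀
    rw [Finset.card_image_of_injOn (hinj _ hB₀.2)]
    exact h.1 _ hB₀.1
  · intro B hB C hC hne
    obtain ⟨B₀, hB₀, rfl⟩ := Finset.mem_image.mp hB
    obtain ⟨C₀, hC₀, rfl⟩ := Finset.mem_image.mp hC
    rw [Finset.mem_filter] at hB₀ hC₀
    have hne₀ : B₀ ≠ C₀ := fun hh => hne (by rw [hh])
    have hd := h.2.1 B₀ hB₀.1 C₀ hC₀.1 hne₀
    rw [Finset.disjoint_left] at hd ⊢
    intro x hxB hxC
    obtain ⟨b, hb, rfl⟩ := Finset.mem_image.mp hxB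
    obtain ⟨c, hc, hcb⟩ := Finset.mem_image.mp hxC
    have : c = b := rk_injOn S (by exact_mod_cast hC₀.2 hc) (by exact_mod_cast hB₀.2 hb) hcb
    exact hd hb (this ▸ hc)
  · have hbase : (π.filter (fun B => B ⊆ S)).biUnion id = S := by
      apply Finset.Subset.antisymm
      · intro x hx
        obtain ⟨B, hB, hxB⟩ := Finset.mem_biUnion.mp hx
        exact (Finset.mem_filter.mp hB).2 hxB
      · intro x hx
        obtain ⟨B, hB, hxB⟩ := IM_exists_block h (hS hx)
        exact Finset.mem_biUnion.mpr ⟨B, Finset.mem_filter.mpr ⟨hB, hblk B hB x hxB hx⟩, hxB⟩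
    have : ((π.filter (fun B => B ⊆ S)).image (fun B => B.image (rk S))).biUnion id
        = ((π.filter (fun B => B ⊆ S)).biUnion id).image (rk S) := by
      ext x
      simp only [Finset.mem_biUnion, Finset.mem_image, id]
      constructor
      · rintro ⟨B, ⟨B₀, hB₀, rfl⟩, hxB⟩
        obtain ⟨m, hm, rfl⟩ := Finset.mem_image.mp hxB
        exact ⟨m, ⟨B₀, hB₀, hm⟩, rfl⟩
      · rintro ⟨m, ⟨B₀, hB₀, hm⟩, rfl⟩
        exact ⟨B₀.image (rk S), ⟨B₀, hB₀, rfl⟩, Finset.mem_image_of_mem _ hm⟩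
    rw [this, hbase, rk_image]

/-- the inverse rank map -/
noncomputable def irk (S : Finset ℕ) : ℕ → ℕ := Function.invFunOn (rk S) ↑S

lemma irk_spec {S : Finset ℕ} {i : ℕ} (hi : i ∈ Finset.Icc 1 S.card) :
    irk S i ∈ S ∧ rk S (irk S i) = i := by
  have : ∃ m ∈ (S : Set ℕ), rk S m = i := by
    rw [← rk_image] at hi
    obtain ⟨m, hm, hmi⟩ := Finset.mem_image.mp hi
    exact ⟨m, hm, hmi⟩
  exact ⟨Function.invFunOn_mem this, Function.invFunOn_eq this⟩

lemma irk_rk {S : Finset ℕ} {m : ℕ} (hm : m ∈ S) : irk S (rk S m) = m :=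
  (rk_injOn S).leftInvOn_invFunOn hm

lemma irk_injOn (S : Finset ℕ) : Set.InjOn (irk S) ↑(Finset.Icc 1 S.card) := by
  intro a ha b hb hab
  have ha' := irk_spec (S := S) (by exact_mod_cast ha)
  have hb' := irk_spec (S := S) (by exact_mod_cast hb)
  rw [← ha'.2, ← hb'.2, hab]

lemma irk_image (S : Finset ℕ) : (Finset.Icc 1 S.card).image (irk S) = S := by
  apply Finset.Subset.antisymm
  · intro x hx
    obtain ⟨i, hi, rfl⟩ := Finset.mem_image.mp hx
    exact (irk_spec hi).1
  · intro m hm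
    exact Finset.mem_image.mpr ⟨rk S m, by
      rw [← rk_image]; exact Finset.mem_image_of_mem _ hm, irk_rk hm⟩

lemma irk_block_roundtrip {S B : Finset ℕ} (hB : B ⊆ Finset.Icc 1 S.card) :
    (B.image (irk S)).image (rk S) = B := by
  rw [Finset.image_image]
  have : ∀ b ∈ B, ((rk S) ∘ (irk S)) b = id b := fun b hb => (irk_spec (hB hb)).2
  rw [Finset.image_congr this, Finset.image_id]

/-- structural pieces of the decomposition -/
noncomputable def stradF (π : Finset (Finset ℕ)) (k : ℕ) : Finset (Finset ℕ) :=
  π.filter (fun B => B.card = 2 ∧ lo B < k ∧ k < hi B)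
noncomputable def covF (π : Finset (Finset ℕ)) (k : ℕ) : Finset ℕ := (stradF π k).biUnion id
noncomputable def SlF (n : ℕ) (π : Finset (Finset ℕ)) (k : ℕ) : Finset ℕ :=
  (Finset.Icc 1 n \ covF π k).filter (· < k)
noncomputable def SrF (n : ℕ) (π : Finset (Finset ℕ)) (k : ℕ) : Finset ℕ :=
  (Finset.Icc 1 n \ covF π k).filter (k < ·)
noncomputable def pmF (n : ℕ) (π : Finset (Finset ℕ)) (k : ℕ) : Finset (Finset ℕ) :=
  stradF π k ∪ ((Finset.Icc 1 n \ covF π k).image (fun m => ({m} : Finset ℕ)))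
noncomputable def resF (π : Finset (Finset ℕ)) (S : Finset ℕ) : Finset (Finset ℕ) :=
  (π.filter (fun B => B ⊆ S)).image (fun B => B.image (rk S))
noncomputable def singF (ρ : Finset (Finset ℕ)) : Finset ℕ :=
  (ρ.filter (fun B => B.card = 1)).biUnion id

lemma DCPfun_eq (n : ℕ) (π : Finset (Finset ℕ)) (k : ℕ) :
    DCPfun n (π, k) = (pmF n π k, k, resF π (SlF n π k), resF π (SrF n π k)) := rfl

lemma singLeft_eq (ρ : Finset (Finset ℕ)) (k : ℕ) :
    singLeft ρ k = (singF ρ).filter (· < k) := rfl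
lemma singRight_eq (ρ : Finset (Finset ℕ)) (k : ℕ) :
    singRight ρ k = (singF ρ).filter (k < ·) := rfl

end DCPhelpers
section DCPstruct

variable {n k : ℕ} {π : Finset (Finset ℕ)}

lemma k_mem_Icc (hπ : IsIM n π) (hk : ({k} : Finset ℕ) ∈ π) : k ∈ Finset.Icc 1 n :=
  IM_block_subset hπ hk (Finset.mem_singleton_self k)

lemma strad_subset : stradF π k ⊆ π := Finset.filter_subset _ _

lemma mem_strad {B : Finset ℕ} (hB : B ∈ stradF π k) :
    B ∈ π ∧ B.card = 2 ∧ lo B < k ∧ k < hi B := by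
  simpa [stradF, Finset.mem_filter, and_assoc] using hB

lemma k_notin_cov : k ∉ covF π k := by
  intro h
  obtain ⟨B, hB, hkB⟩ := Finset.mem_biUnion.mp h
  obtain ⟨_, hc, hlo, hhi⟩ := mem_strad hB
  rcases mem_pair_cases hc hkB with h' | h' <;> omega

lemma cov_subset (hπ : IsIM n π) : covF π k ⊆ Finset.Icc 1 n := by
  intro x hx
  obtain ⟨B, hB, hxB⟩ := Finset.mem_biUnion.mp hx
  exact IM_block_subset hπ (strad_subset hB) hxB

lemma block_cases (hπ : IsIM n π) (hk : ({k} : Finset ℕ) ∈ π) {B : Finset ℕ} (hB : B ∈ π) :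
    B = {k} ∨ B ∈ stradF π k ∨ B ⊆ SlF n π k ∨ B ⊆ SrF n π k := by
  by_cases hBk : B = {k}
  · exact Or.inl hBk
  by_cases hBs : B ∈ stradF π k
  · exact Or.inr (Or.inl hBs)
  have hkB : k ∉ B := by
    intro hkB
    exact hBk (IM_unique_block hπ hB hk hkB (Finset.mem_singleton_self k))
  have hcov : ∀ m ∈ B, m ∉ covF π k := by
    intro m hm hmc
    obtain ⟨C, hC, hmC⟩ := Finset.mem_biUnion.mp hmc
    have : B = C := IM_unique_block hπ hB (strad_subset hC) hm hmC
    exact hBs (this ▸ hC)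
  have hsub : ∀ m ∈ B, m ∈ Finset.Icc 1 n \ covF π k := fun m hm =>
    Finset.mem_sdiff.mpr ⟨IM_block_subset hπ hB hm, hcov m hm⟩
  have hne : B.Nonempty := IM_nonempty hπ hB
  rcases hπ.1 B hB with hc | hc
  · obtain ⟨m, rfl⟩ := Finset.card_eq_one.mp hc
    have hmk : m ≠ k := fun h => hkB (h ▸ Finset.mem_singleton_self m)
    rcases Nat.lt_or_ge m k with h' | h'
    · exact Or.inr (Or.inr (Or.inl (Finset.singleton_subset_iff.mpr
        (Finset.mem_filter.mpr ⟨hsub m (Finset.mem_singleton_self m), h'⟩))))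
    · exact Or.inr (Or.inr (Or.inr (Finset.singleton_subset_iff.mpr
        (Finset.mem_filter.mpr ⟨hsub m (Finset.mem_singleton_self m), by omega⟩))))
  · have hlo : lo B ≠ k := fun h => hkB (h ▸ lo_mem hne)
    have hhi : hi B ≠ k := fun h => hkB (h ▸ hi_mem hne)
    have hns : ¬(lo B < k ∧ k < hi B) := by
      intro h'
      exact hBs (Finset.mem_filter.mpr ⟨hB, hc, h'.1, h'.2⟩)
    rcases Nat.lt_or_ge (hi B) k with h' | h'
    · refine Or.inr (Or.inr (Or.inl ?_))
      intro x hx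
      exact Finset.mem_filter.mpr ⟨hsub x hx, lt_of_le_of_lt (le_hi hx) h'⟩
    · have hlo' : k < lo B := by
        have := lo_le (hi_mem hne)
        omega
      refine Or.inr (Or.inr (Or.inr ?_))
      intro x hx
      exact Finset.mem_filter.mpr ⟨hsub x hx, lt_of_lt_of_le hlo' (lo_le hx)⟩

lemma Sl_disj_cov : ∀ m ∈ SlF n π k, m ∉ covF π k := by
  intro m hm
  exact (Finset.mem_sdiff.mp (Finset.mem_filter.mp hm).1).2

lemma Sl_lt : ∀ m ∈ SlF n π k, m < k := fun m hm => (Finset.mem_filter.mp hm).2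
lemma Sr_gt : ∀ m ∈ SrF n π k, k < m := fun m hm => (Finset.mem_filter.mp hm).2
lemma Sl_subset_Icc : SlF n π k ⊆ Finset.Icc 1 n := fun m hm =>
  (Finset.mem_sdiff.mp (Finset.mem_filter.mp hm).1).1
lemma Sr_subset_Icc : SrF n π k ⊆ Finset.Icc 1 n := fun m hm =>
  (Finset.mem_sdiff.mp (Finset.mem_filter.mp hm).1).1
lemma Sr_disj_cov : ∀ m ∈ SrF n π k, m ∉ covF π k := by
  intro m hm
  exact (Finset.mem_sdiff.mp (Finset.mem_filter.mp hm).1).2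

lemma strad_block_sub_cov {B : Finset ℕ} (hB : B ∈ stradF π k) : B ⊆ covF π k :=
  fun x hx => Finset.mem_biUnion.mpr ⟨B, hB, hx⟩

lemma Sl_closed (hπ : IsIM n π) (hk : ({k} : Finset ℕ) ∈ π) :
    ∀ B ∈ π, ∀ m ∈ B, m ∈ SlF n π k → B ⊆ SlF n π k := by
  intro B hB m hm hmS
  rcases block_cases hπ hk hB with rfl | h | h | h
  · rw [Finset.mem_singleton] at hm; subst hm
    exact absurd (Sl_lt m hmS) (lt_irrefl m)
  · exact absurd (strad_block_sub_cov h hm) (Sl_disj_cov m hmS)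
  · exact h
  · have := Sr_gt m (h hm)
    have := Sl_lt m hmS
    omega

lemma Sr_closed (hπ : IsIM n π) (hk : ({k} : Finset ℕ) ∈ π) :
    ∀ B ∈ π, ∀ m ∈ B, m ∈ SrF n π k → B ⊆ SrF n π k := by
  intro B hB m hm hmS
  rcases block_cases hπ hk hB with rfl | h | h | h
  · rw [Finset.mem_singleton] at hm; subst hm
    exact absurd (Sr_gt m hmS) (lt_irrefl m)
  · exact absurd (strad_block_sub_cov h hm) (Sr_disj_cov m hmS)
  · have := Sl_lt m (h hm)
    have := Sr_gt m hmS
    omega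
  · exact h

lemma pi_decomp (hπ : IsIM n π) (hk : ({k} : Finset ℕ) ∈ π) :
    π = stradF π k ∪ π.filter (fun B => B ⊆ SlF n π k) ∪
        π.filter (fun B => B ⊆ SrF n π k) ∪ {({k} : Finset ℕ)} := by
  ext B
  simp only [Finset.mem_union, Finset.mem_filter, Finset.mem_singleton]
  constructor
  · intro hB
    rcases block_cases hπ hk hB with h | h | h | h
    · exact Or.inr h
    · exact Or.inl (Or.inl (Or.inl h))
    · exact Or.inl (Or.inl (Or.inr ⟨hB, h⟩))
    · exact Or.inl (Or.inr ⟨hB, h⟩)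
  · rintro ((( h | ⟨h, _⟩) | ⟨h, _⟩) | rfl)
    · exact strad_subset h
    · exact h
    · exact h
    · exact hk

lemma pm_IsIM (hπ : IsIM n π) : IsIM n (pmF n π k) := by
  refine ⟨?_, ?_, ?_⟩
  · intro B hB
    rcases Finset.mem_union.mp hB with h | h
    · exact Or.inr (mem_strad h).2.1
    · obtain ⟨m, _, rfl⟩ := Finset.mem_image.mp h
      exact Or.inl (Finset.card_singleton m)
  · intro B hB C hC hne
    rcases Finset.mem_union.mp hB with h | h <;> rcases Finset.mem_union.mp hC with h' | h'
    · exact hπ.2.1 B (strad_subset h) C (strad_subset h') hne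
    · obtain ⟨m, hm, rfl⟩ := Finset.mem_image.mp h'
      rw [Finset.disjoint_singleton_right]
      intro hmB
      exact (Finset.mem_sdiff.mp hm).2 (strad_block_sub_cov h hmB)
    · obtain ⟨m, hm, rfl⟩ := Finset.mem_image.mp h
      rw [Finset.disjoint_singleton_left]
      intro hmC
      exact (Finset.mem_sdiff.mp hm).2 (strad_block_sub_cov h' hmC)
    · obtain ⟨m, hm, rfl⟩ := Finset.mem_image.mp h
      obtain ⟨m', hm', rfl⟩ := Finset.mem_image.mp h'
      rw [Finset.disjoint_singleton]
      intro hmm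
      exact hne (by rw [hmm])
  · ext x
    simp only [pmF, Finset.mem_biUnion, Finset.mem_union, id]
    constructor
    · rintro ⟨B, hB | hB, hxB⟩
      · exact IM_block_subset hπ (strad_subset hB) hxB
      · obtain ⟨m, hm, rfl⟩ := Finset.mem_image.mp hB
        rw [Finset.mem_singleton] at hxB; subst hxB
        exact (Finset.mem_sdiff.mp hm).1
    · intro hx
      by_cases hc : x ∈ covF π k
      · obtain ⟨B, hB, hxB⟩ := Finset.mem_biUnion.mp hc
        exact ⟨B, Or.inl hB, hxB⟩
      · exact ⟨{x}, Or.inr (Finset.mem_image_of_mem _ (Finset.mem_sdiff.mpr ⟨hx, hc⟩)),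
          Finset.mem_singleton_self x⟩

lemma pm_filter_two : (pmF n π k).filter (fun B => B.card = 2) = stradF π k := by
  ext B
  simp only [Finset.mem_filter, pmF, Finset.mem_union]
  constructor
  · rintro ⟨h | h, hc⟩
    · exact h
    · obtain ⟨m, _, rfl⟩ := Finset.mem_image.mp h
      simp at hc
  · intro h
    exact ⟨Or.inl h, (mem_strad h).2.1⟩

lemma pm_sing : singF (pmF n π k) = Finset.Icc 1 n \ covF π k := by
  ext x
  simp only [singF, Finset.mem_biUnion, Finset.mem_filter, id]
  constructor
  · rintro ⟨B, ⟨hB, hc⟩, hxB⟩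
    rcases Finset.mem_union.mp hB with h | h
    · have := (mem_strad h).2.1; omega
    · obtain ⟨m, hm, rfl⟩ := Finset.mem_image.mp h
      rw [Finset.mem_singleton] at hxB; subst hxB
      exact hm
  · intro hx
    exact ⟨{x}, ⟨Finset.mem_union_right _ (Finset.mem_image_of_mem _ hx),
      Finset.card_singleton x⟩, Finset.mem_singleton_self x⟩

lemma pm_singLeft : singLeft (pmF n π k) k = SlF n π k := by
  rw [singLeft_eq, pm_sing]; rfl

lemma pm_singRight : singRight (pmF n π k) k = SrF n π k := by
  rw [singRight_eq, pm_sing]; rfl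

end DCPstruct
section pullback

lemma biUnion_image_swap (T : Finset (Finset ℕ)) (g : ℕ → ℕ) :
    (T.image (fun B => B.image g)).biUnion id = (T.biUnion id).image g := by
  ext x
  simp only [Finset.mem_biUnion, Finset.mem_image, id]
  constructor
  · rintro ⟨B, ⟨B₀, hB₀, rfl⟩, hxB⟩
    obtain ⟨m, hm, rfl⟩ := Finset.mem_image.mp hxB
    exact ⟨m, ⟨B₀, hB₀, hm⟩, rfl⟩
  · rintro ⟨m, ⟨B₀, hB₀, hm⟩, rfl⟩
    exact ⟨B₀.image g, ⟨B₀, hB₀, rfl⟩, Finset.mem_image_of_mem _ hm⟩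

/-- pull a matching of `[|S|]` back onto `S` -/
noncomputable def pbF (S : Finset ℕ) (σ : Finset (Finset ℕ)) : Finset (Finset ℕ) :=
  σ.image (fun B => B.image (irk S))

variable {S : Finset ℕ} {σ : Finset (Finset ℕ)}

lemma pb_block_sub (hσ : IsIM S.card σ) {B : Finset ℕ} (hB : B ∈ pbF S σ) : B ⊆ S := by
  obtain ⟨B₀, hB₀, rfl⟩ := Finset.mem_image.mp hB
  intro x hx
  obtain ⟨i, hi, rfl⟩ := Finset.mem_image.mp hx
  exact (irk_spec (IM_block_subset hσ hB₀ hi)).1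

lemma pb_card (hσ : IsIM S.card σ) {B₀ : Finset ℕ} (hB₀ : B₀ ∈ σ) :
    (B₀.image (irk S)).card = B₀.card :=
  Finset.card_image_of_injOn ((irk_injOn S).mono (by exact_mod_cast IM_block_subset hσ hB₀))

lemma pb_cards (hσ : IsIM S.card σ) {B : Finset ℕ} (hB : B ∈ pbF S σ) :
    B.card = 1 ∨ B.card = 2 := by
  obtain ⟨B₀, hB₀, rfl⟩ := Finset.mem_image.mp hB
  rw [pb_card hσ hB₀]
  exact hσ.1 _ hB₀

lemma pb_nonempty (hσ : IsIM S.card σ) {B : Finset ℕ} (hB : B ∈ pbF S σ) : B.Nonempty := by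
  rcases pb_cards hσ hB with h | h <;> (rw [← Finset.card_pos]; omega)

lemma pb_disjoint (hσ : IsIM S.card σ) {B C : Finset ℕ} (hB : B ∈ pbF S σ)
    (hC : C ∈ pbF S σ) (hne : B ≠ C) : Disjoint B C := by
  obtain ⟨B₀, hB₀, rfl⟩ := Finset.mem_image.mp hB
  obtain ⟨C₀, hC₀, rfl⟩ := Finset.mem_image.mp hC
  have hne₀ : B₀ ≠ C₀ := fun h => hne (by rw [h])
  have hd := hσ.2.1 B₀ hB₀ C₀ hC₀ hne₀
  rw [Finset.disjoint_left] at hd ⊢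
  intro x hxB hxC
  obtain ⟨b, hb, rfl⟩ := Finset.mem_image.mp hxB
  obtain ⟨c, hc, hcb⟩ := Finset.mem_image.mp hxC
  have : c = b := irk_injOn S (by exact_mod_cast IM_block_subset hσ hC₀ hc)
    (by exact_mod_cast IM_block_subset hσ hB₀ hb) hcb
  exact hd hb (this ▸ hc)

lemma pb_biUnion (hσ : IsIM S.card σ) : (pbF S σ).biUnion id = S := by
  rw [pbF, biUnion_image_swap, hσ.2.2, irk_image]

lemma pb_res (hσ : IsIM S.card σ) :
    (pbF S σ).image (fun B => B.image (rk S)) = σ := by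
  rw [pbF, Finset.image_image]
  have : ∀ B ∈ σ, ((fun B => Finset.image (rk S) B) ∘ fun B => Finset.image (irk S) B) B
      = id B := fun B hB => irk_block_roundtrip (IM_block_subset hσ hB)
  rw [Finset.image_congr this, Finset.image_id]

end pullback
section glue

/-- the inverse construction for surjectivity -/
noncomputable def glueF (k : ℕ) (ρ σl σr : Finset (Finset ℕ)) : Finset (Finset ℕ) :=
  ρ.filter (fun B => B.card = 2) ∪ pbF (singLeft ρ k) σl ∪ pbF (singRight ρ k) σr ∪
    {({k} : Finset ℕ)}

lemma glue_mem {k : ℕ} {ρ σl σr B : Finset ℕ → Prop} : True := trivial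

lemma mem_glue {k : ℕ} {ρ σl σr : Finset (Finset ℕ)} {B : Finset ℕ} :
    B ∈ glueF k ρ σl σr ↔
      B ∈ ρ.filter (fun B => B.card = 2) ∨ B ∈ pbF (singLeft ρ k) σl ∨
      B ∈ pbF (singRight ρ k) σr ∨ B = {k} := by
  simp [glueF, Finset.mem_union, or_assoc]
  tauto

lemma DCP_surj_aux {n k : ℕ} {ρ σl σr : Finset (Finset ℕ)}
    (hρ : IsIM n ρ) (hkIcc : k ∈ Finset.Icc 1 n)
    (hst : ∀ B ∈ ρ, B.card = 2 → lo B < k ∧ k < hi B)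
    (hσl : IsIM (singLeft ρ k).card σl) (hσr : IsIM (singRight ρ k).card σr) :
    IsIM n (glueF k ρ σl σr) ∧ ({k} : Finset ℕ) ∈ glueF k ρ σl σr ∧
      DCPfun n (glueF k ρ σl σr, k) = (ρ, k, σl, σr) := by
  have hkρ : ({k} : Finset ℕ) ∈ ρ := by
    obtain ⟨B, hB, hkB⟩ := IM_exists_block hρ hkIcc
    rcases hρ.1 B hB with h | h
    · obtain ⟨m, rfl⟩ := Finset.card_eq_one.mp h
      rw [Finset.mem_singleton] at hkB
      rw [← hkB] at hB
      exact hB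
    · exfalso
      have := hst B hB h
      rcases mem_pair_cases h hkB with h' | h' <;> omega
  -- cv and sing
  have hcv_sub : (ρ.filter (fun B => B.card = 2)).biUnion id ⊆ Finset.Icc 1 n := by
    intro x hx
    obtain ⟨C, hC, hxC⟩ := Finset.mem_biUnion.mp hx
    exact IM_block_subset hρ (Finset.filter_subset _ _ hC) hxC
  have hsing : Finset.Icc 1 n \ (ρ.filter (fun B => B.card = 2)).biUnion id = singF ρ := by
    ext m
    simp only [Finset.mem_sdiff, singF, Finset.mem_biUnion, Finset.mem_filter, id]
    constructor
    · rintro ⟨hm, hmc⟩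
      obtain ⟨B, hB, hmB⟩ := IM_exists_block hρ hm
      rcases hρ.1 B hB with h | h
      · exact ⟨B, ⟨hB, h⟩, hmB⟩
      · exact absurd ⟨B, ⟨hB, h⟩, hmB⟩ hmc
    · rintro ⟨B, ⟨hB, h1⟩, hmB⟩
      refine ⟨IM_block_subset hρ hB hmB, ?_⟩
      rintro ⟨C, ⟨hC, h2⟩, hmC⟩
      have := IM_unique_block hρ hB hC hmB hmC
      subst this; omega
  have hk_sing : k ∈ singF ρ := Finset.mem_biUnion.mpr
    ⟨{k}, Finset.mem_filter.mpr ⟨hkρ, Finset.card_singleton k⟩, Finset.mem_singleton_self k⟩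
  have hkcv : k ∉ (ρ.filter (fun B => B.card = 2)).biUnion id := by
    rw [← hsing] at hk_sing
    exact (Finset.mem_sdiff.mp hk_sing).2
  have hsing_cv : ∀ m ∈ singF ρ, m ∉ (ρ.filter (fun B => B.card = 2)).biUnion id := by
    intro m hm
    rw [← hsing] at hm
    exact (Finset.mem_sdiff.mp hm).2
  have hSl_lt : ∀ m ∈ singLeft ρ k, m < k := fun m hm => (Finset.mem_filter.mp hm).2
  have hSr_gt : ∀ m ∈ singRight ρ k, k < m := fun m hm => (Finset.mem_filter.mp hm).2
  have hSl_sing : singLeft ρ k ⊆ singF ρ := Finset.filter_subset _ _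
  have hSr_sing : singRight ρ k ⊆ singF ρ := Finset.filter_subset _ _
  have hsing_Icc : singF ρ ⊆ Finset.Icc 1 n := by
    rw [← hsing]; exact Finset.sdiff_subset
  have hP2cv : ∀ B ∈ ρ.filter (fun B => B.card = 2),
      B ⊆ (ρ.filter (fun B => B.card = 2)).biUnion id :=
    fun B hB x hx => Finset.mem_biUnion.mpr ⟨B, hB, hx⟩
  -- support disjointness
  have dcvSl : Disjoint ((ρ.filter (fun B => B.card = 2)).biUnion id) (singLeft ρ k) :=
    Finset.disjoint_left.mpr (fun m hm hm' => hsing_cv m (hSl_sing hm') hm)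
  have dcvSr : Disjoint ((ρ.filter (fun B => B.card = 2)).biUnion id) (singRight ρ k) :=
    Finset.disjoint_left.mpr (fun m hm hm' => hsing_cv m (hSr_sing hm') hm)
  have dSlSr : Disjoint (singLeft ρ k) (singRight ρ k) :=
    Finset.disjoint_left.mpr (fun m hm hm' => by
      have := hSl_lt m hm; have := hSr_gt m hm'; omega)
  have dcvk : Disjoint ((ρ.filter (fun B => B.card = 2)).biUnion id) ({k} : Finset ℕ) :=
    Finset.disjoint_singleton_right.mpr hkcv
  have dSlk : Disjoint (singLeft ρ k) ({k} : Finset ℕ) :=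
    Finset.disjoint_singleton_right.mpr (fun h => absurd (hSl_lt k h) (lt_irrefl k))
  have dSrk : Disjoint (singRight ρ k) ({k} : Finset ℕ) :=
    Finset.disjoint_singleton_right.mpr (fun h => absurd (hSr_gt k h) (lt_irrefl k))
  -- IsIM n π
  have hIM : IsIM n (glueF k ρ σl σr) := by
    refine ⟨?_, ?_, ?_⟩
    · intro B hB
      rcases mem_glue.mp hB with h | h | h | rfl
      · exact Or.inr (Finset.mem_filter.mp h).2
      · exact pb_cards hσl h
      · exact pb_cards hσr h
      · exact Or.inl (Finset.card_singleton k)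
    · intro B hB C hC hne
      rcases mem_glue.mp hB with h1 | h1 | h1 | rfl <;>
        rcases mem_glue.mp hC with h2 | h2 | h2 | h2
      · exact hρ.2.1 B (Finset.filter_subset _ _ h1) C (Finset.filter_subset _ _ h2) hne
      · exact (dcvSl.mono (hP2cv B h1) (pb_block_sub hσl h2))
      · exact (dcvSr.mono (hP2cv B h1) (pb_block_sub hσr h2))
      · subst h2; exact (dcvk.mono (hP2cv B h1) (le_refl _))
      · exact ((dcvSl.symm).mono (pb_block_sub hσl h1) (hP2cv C h2))
      · exact pb_disjoint hσl h1 h2 hne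
      · exact (dSlSr.mono (pb_block_sub hσl h1) (pb_block_sub hσr h2))
      · subst h2; exact (dSlk.mono (pb_block_sub hσl h1) (le_refl _))
      · exact ((dcvSr.symm).mono (pb_block_sub hσr h1) (hP2cv C h2))
      · exact ((dSlSr.symm).mono (pb_block_sub hσr h1) (pb_block_sub hσl h2))
      · exact pb_disjoint hσr h1 h2 hne
      · subst h2; exact (dSrk.mono (pb_block_sub hσr h1) (le_refl _))
      · exact ((dcvk.symm).mono (le_refl _) (hP2cv C h2))
      · exact ((dSlk.symm).mono (le_refl _) (pb_block_sub hσl h2))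
      · exact ((dSrk.symm).mono (le_refl _) (pb_block_sub hσr h2))
      · subst h2; exact absurd rfl hne
    · ext x
      simp only [Finset.mem_biUnion, id]
      constructor
      · rintro ⟨B, hB, hxB⟩
        rcases mem_glue.mp hB with h | h | h | rfl
        · exact hcv_sub (hP2cv B h hxB)
        · exact hsing_Icc (hSl_sing (pb_block_sub hσl h hxB))
        · exact hsing_Icc (hSr_sing (pb_block_sub hσr h hxB))
        · rw [Finset.mem_singleton] at hxB; subst hxB; exact hkIcc
      · intro hx
        obtain ⟨B, hB, hxB⟩ := IM_exists_block hρ hx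
        rcases hρ.1 B hB with h | h
        · have hxs : x ∈ singF ρ := Finset.mem_biUnion.mpr
            ⟨B, Finset.mem_filter.mpr ⟨hB, h⟩, hxB⟩
          rcases lt_trichotomy x k with h' | h' | h'
          · have hxSl : x ∈ singLeft ρ k := Finset.mem_filter.mpr ⟨hxs, h'⟩
            rw [← pb_biUnion hσl] at hxSl
            obtain ⟨C, hC, hxC⟩ := Finset.mem_biUnion.mp hxSl
            exact ⟨C, mem_glue.mpr (Or.inr (Or.inl hC)), hxC⟩
          · subst h'
            exact ⟨{x}, mem_glue.mpr (Or.inr (Or.inr (Or.inr rfl))),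
              Finset.mem_singleton_self x⟩
          · have hxSr : x ∈ singRight ρ k := Finset.mem_filter.mpr ⟨hxs, h'⟩
            rw [← pb_biUnion hσr] at hxSr
            obtain ⟨C, hC, hxC⟩ := Finset.mem_biUnion.mp hxSr
            exact ⟨C, mem_glue.mpr (Or.inr (Or.inr (Or.inl hC))), hxC⟩
        · exact ⟨B, mem_glue.mpr (Or.inl (Finset.mem_filter.mpr ⟨hB, h⟩)),
            hxB⟩
  have hkglue : ({k} : Finset ℕ) ∈ glueF k ρ σl σr :=
    mem_glue.mpr (Or.inr (Or.inr (Or.inr rfl)))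
  -- straddling pairs of glue are exactly the pairs of ρ
  have hstradπ : stradF (glueF k ρ σl σr) k = ρ.filter (fun B => B.card = 2) := by
    ext B
    simp only [stradF, Finset.mem_filter]
    constructor
    · rintro ⟨hBπ, hc2, hlo, hhi⟩
      rcases mem_glue.mp hBπ with h | h | h | rfl
      · exact Finset.mem_filter.mp h
      · exfalso
        have hne : B.Nonempty := pb_nonempty hσl h
        have := hSl_lt (hi B) (pb_block_sub hσl h (hi_mem hne))
        omega
      · exfalso
        have hne : B.Nonempty := pb_nonempty hσr h
        have := hSr_gt (lo B) (pb_block_sub hσr h (lo_mem hne))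
        omega
      · simp at hc2
    · intro h
      exact ⟨mem_glue.mpr (Or.inl (Finset.mem_filter.mpr h)), h.2,
        (hst B h.1 h.2).1, (hst B h.1 h.2).2⟩
  have hcov : covF (glueF k ρ σl σr) k = (ρ.filter (fun B => B.card = 2)).biUnion id := by
    rw [covF, hstradπ]
  have hSlF : SlF n (glueF k ρ σl σr) k = singLeft ρ k := by
    rw [SlF, hcov, hsing]; rfl
  have hSrF : SrF n (glueF k ρ σl σr) k = singRight ρ k := by
    rw [SrF, hcov, hsing]; rfl
  have hpm : pmF n (glueF k ρ σl σr) k = ρ := by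
    rw [pmF, hstradπ, hcov, hsing]
    ext B
    simp only [Finset.mem_union, Finset.mem_filter, Finset.mem_image]
    constructor
    · rintro (⟨hB, _⟩ | ⟨m, hm, rfl⟩)
      · exact hB
      · obtain ⟨C, hC, hmC⟩ := Finset.mem_biUnion.mp hm
        have hC' := Finset.mem_filter.mp hC
        obtain ⟨m', rfl⟩ := Finset.card_eq_one.mp hC'.2
        simp only [id, Finset.mem_singleton] at hmC
        rw [← hmC] at hC'
        exact hC'.1
    · intro hB
      rcases hρ.1 B hB with h | h
      · obtain ⟨m, rfl⟩ := Finset.card_eq_one.mp h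
        exact Or.inr ⟨m, Finset.mem_biUnion.mpr
          ⟨{m}, Finset.mem_filter.mpr ⟨hB, Finset.card_singleton m⟩,
            Finset.mem_singleton_self m⟩, rfl⟩
      · exact Or.inl ⟨hB, h⟩
  have hfiltl : (glueF k ρ σl σr).filter (fun B => B ⊆ singLeft ρ k)
      = pbF (singLeft ρ k) σl := by
    ext B
    simp only [Finset.mem_filter]
    constructor
    · rintro ⟨hBπ, hBS⟩
      rcases mem_glue.mp hBπ with h | h | h | rfl
      · exfalso
        have hB' := Finset.mem_filter.mp h
        have hne : B.Nonempty := by rw [← Finset.card_pos, hB'.2]; omega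
        have h1 := (hst B hB'.1 hB'.2).2
        have h2 := hSl_lt (hi B) (hBS (hi_mem hne))
        omega
      · exact h
      · exfalso
        have hne : B.Nonempty := pb_nonempty hσr h
        have h1 := hSr_gt (lo B) (pb_block_sub hσr h (lo_mem hne))
        have h2 := hSl_lt (lo B) (hBS (lo_mem hne))
        omega
      · exact absurd (hSl_lt k (hBS (Finset.mem_singleton_self k))) (lt_irrefl k)
    · intro h
      exact ⟨mem_glue.mpr (Or.inr (Or.inl h)), pb_block_sub hσl h⟩
  have hfiltr : (glueF k ρ σl σr).filter (fun B => B ⊆ singRight ρ k)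
      = pbF (singRight ρ k) σr := by
    ext B
    simp only [Finset.mem_filter]
    constructor
    · rintro ⟨hBπ, hBS⟩
      rcases mem_glue.mp hBπ with h | h | h | rfl
      · exfalso
        have hB' := Finset.mem_filter.mp h
        have hne : B.Nonempty := by rw [← Finset.card_pos, hB'.2]; omega
        have h1 := (hst B hB'.1 hB'.2).1
        have h2 := hSr_gt (lo B) (hBS (lo_mem hne))
        omega
      · exfalso
        have hne : B.Nonempty := pb_nonempty hσl h
        have h1 := hSl_lt (lo B) (pb_block_sub hσl h (lo_mem hne))
        have h2 := hSr_gt (lo B) (hBS (lo_mem hne))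
        omega
      · exact h
      · exact absurd (hSr_gt k (hBS (Finset.mem_singleton_self k))) (lt_irrefl k)
    · intro h
      exact ⟨mem_glue.mpr (Or.inr (Or.inr (Or.inl h))), pb_block_sub hσr h⟩
  refine ⟨hIM, hkglue, ?_⟩
  rw [DCPfun_eq, hpm]
  simp only [Prod.mk.injEq, true_and]
  refine ⟨?_, ?_⟩
  · rw [resF, hSlF, hfiltl, pb_res hσl]
  · rw [resF, hSrF, hfiltr, pb_res hσr]

end glue
/-- `DCP` is a bijection from `{(π,k) : π ∈ P₁,₂(n), {k} ∈ s(π)}` onto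
`dcp(n) = {(π^m,k,σ^l,σ^r) : π^m ∈ P₁,₂(n), k ∈ ∩p(π^m),
σ^l ∈ P₁,₂(|s^k_l(π^m)|), σ^r ∈ P₁,₂(|s^k_r(π^m)|)}`. -/
theorem DCP_bijection (n : ℕ) :
    Set.BijOn (DCPfun n)
      {p : Finset (Finset ℕ) × ℕ | IsIM n p.1 ∧ ({p.2} : Finset ℕ) ∈ p.1}
      {q : Finset (Finset ℕ) × ℕ × Finset (Finset ℕ) × Finset (Finset ℕ) |
        IsIM n q.1 ∧ q.2.1 ∈ Finset.Icc 1 n ∧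
        (∀ B ∈ q.1, B.card = 2 → lo B < q.2.1 ∧ q.2.1 < hi B) ∧
        IsIM (singLeft q.1 q.2.1).card q.2.2.1 ∧
        IsIM (singRight q.1 q.2.1).card q.2.2.2} := by
  refine ⟨?_, ?_, ?_⟩
  · -- MapsTo
    rintro ⟨π, k⟩ ⟨hπ, hk⟩
    simp only [Set.mem_setOf_eq]
    rw [DCPfun_eq]
    refine ⟨pm_IsIM hπ, k_mem_Icc hπ hk, ?_, ?_, ?_⟩
    · intro B hB hc
      have : B ∈ stradF π k := pm_filter_two ▸ Finset.mem_filter.mpr ⟨hB, hc⟩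
      exact (mem_strad this).2.2
    · show IsIM (singLeft (pmF n π k) k).card (resF π (SlF n π k))
      rw [pm_singLeft]
      exact IM_restrict hπ Sl_subset_Icc (Sl_closed hπ hk)
    · show IsIM (singRight (pmF n π k) k).card (resF π (SrF n π k))
      rw [pm_singRight]
      exact IM_restrict hπ Sr_subset_Icc (Sr_closed hπ hk)
  · -- InjOn
    rintro ⟨π, k⟩ ⟨hπ, hk⟩ ⟨π', k'⟩ ⟨hπ', hk'⟩ heq
    simp only [Set.mem_setOf_eq] at hπ hk hπ' hk'
    rw [DCPfun_eq, DCPfun_eq] at heq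
    simp only [Prod.mk.injEq] at heq
    obtain ⟨hpm, hkk, hsl, hsr⟩ := heq
    subst hkk
    have hstrad : stradF π k = stradF π' k := by
      rw [← pm_filter_two (n := n) (π := π), ← pm_filter_two (n := n) (π := π'), hpm]
    have hSl : SlF n π k = SlF n π' k := by
      simp only [SlF, covF, hstrad]
    have hSr : SrF n π k = SrF n π' k := by
      simp only [SrF, covF, hstrad]
    rw [← hSl] at hsl
    rw [← hSr] at hsr
    unfold resF at hsl hsr
    have hfl : π.filter (fun B => B ⊆ SlF n π k) = π'.filter (fun B => B ⊆ SlF n π k) :=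
      sets_image_inj (fun B hB => (Finset.mem_filter.mp hB).2)
        (fun B hB => (Finset.mem_filter.mp hB).2) hsl
    have hfr : π.filter (fun B => B ⊆ SrF n π k) = π'.filter (fun B => B ⊆ SrF n π k) :=
      sets_image_inj (fun B hB => (Finset.mem_filter.mp hB).2)
        (fun B hB => (Finset.mem_filter.mp hB).2) hsr
    have hpi : π = π' := by
      rw [pi_decomp hπ hk, hstrad, hfl, hfr, hSl, hSr, ← pi_decomp hπ' hk']
    rw [hpi]
  · -- SurjOn
    rintro ⟨ρ, k, σl, σr⟩ hq
    simp only [Set.mem_setOf_eq] at hq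
    obtain ⟨hρ, hkIcc, hst, hσl, hσr⟩ := hq
    obtain ⟨hIM, hkglue, hDCP⟩ := DCP_surj_aux hρ hkIcc hst hσl hσr
    exact ⟨(glueF k ρ σl σr, k), ⟨hIM, hkglue⟩, hDCP⟩
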